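/- Let A be a primitive axial algebra of Jordan type η over a field F with char F ≠ 2, and let a, b be distinct η-axes in A. Then the subalgebra N_{a,b} generated by a and b is 2-dimensional if and only if one of the following holds: (1) ab = 0; (2) η = −1 and ab = −a − b; (3) η = 1/2 and ab = (1/2)a + (1/2)b. Moreover, in cases (2) and (3) the algebra N_{a,b} has no identity element. -/

import Mathlib

universe u v

section Prelim

variable (F : Type u) {A : Type v} [Field F] [NonUnitalNonAssocCommRing A]
  [Module F A] [SMulCommClass F A A] [IsScalarTower F A A]

/-- The λ-eigenspace of the adjoint map `ad_a : x ↦ a * x`. -/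
def eigSp (a : A) (l : F) : Submodule F A where
  carrier := {x | a * x = l • x}
  add_mem' := by
    intro x y hx hy
    simp only [Set.mem_setOf_eq] at *
    rw [mul_add, hx, hy, smul_add]
  zero_mem' := by simp
  smul_mem' := by
    intro c x hx
    simp only [Set.mem_setOf_eq] at *
    rw [mul_smul_comm, hx, smul_smul, smul_smul, mul_comm]

/-- `a` is a (primitive) `η`-axis. -/
structure IsAxis (η : F) (a : A) : Prop where
  ne_zero : a ≠ 0
  idem : a * a = a
  decomp : eigSp F a 1 ⊔ eigSp F a 0 ⊔ eigSp F a η = ⊤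
  prim : eigSp F a 1 = Submodule.span F {a}
  f11 : ∀ x ∈ eigSp F a 1, ∀ y ∈ eigSp F a 1, x * y ∈ eigSp F a 1
  f00 : ∀ x ∈ eigSp F a 0, ∀ y ∈ eigSp F a 0, x * y ∈ eigSp F a 0
  f10 : ∀ x ∈ eigSp F a 1, ∀ y ∈ eigSp F a 0, x * y = 0
  fpe : ∀ x ∈ eigSp F a 1 ⊔ eigSp F a 0, ∀ y ∈ eigSp F a η, x * y ∈ eigSp F a η
  fee : ∀ x ∈ eigSp F a η, ∀ y ∈ eigSp F a η, x * y ∈ eigSp F a 1 ⊔ eigSp F a 0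

/-- `τ` is the Miyamoto involution of the `η`-axis `a`. -/
structure IsMiyamoto (η : F) (a : A) (τ : A → A) : Prop where
  fixes : ∀ x ∈ eigSp F a 1 ⊔ eigSp F a 0, τ x = x
  negates : ∀ x ∈ eigSp F a η, τ x = -x
  map_add : ∀ x y : A, τ (x + y) = τ x + τ y
  map_smul : ∀ (c : F) (x : A), τ (c • x) = c • τ x
  map_mul : ∀ x y : A, τ (x * y) = τ x * τ y
  bijective : Function.Bijective τ

/-- `c = φ_a(u)`, the projection of `u` to `F·a` w.r.t. the axis `a`. -/
def IsProjCoeff (η : F) (a u : A) (c : F) : Prop :=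
  ∃ u0 ∈ eigSp F a 0, ∃ ue ∈ eigSp F a η, u = c • a + u0 + ue

/-- `e` is an identity element of the subalgebra `N`. -/
def IsIdentOf (N : NonUnitalSubalgebra F A) (e : A) : Prop :=
  e ∈ N ∧ ∀ z ∈ N, e * z = z

/-- `ψ` is an `F`-algebra automorphism of `A`. -/
structure IsAlgAut (ψ : A → A) : Prop where
  map_add : ∀ x y : A, ψ (x + y) = ψ x + ψ y
  map_smul : ∀ (c : F) (x : A), ψ (c • x) = c • ψ x
  map_mul : ∀ x y : A, ψ (x * y) = ψ x * ψ y
  bijective : Function.Bijective ψ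

/-- The graph `Δ_𝒜`: distinct axes are adjacent iff their product is nonzero. -/
def axesGraph (𝒜 : Set A) : SimpleGraph 𝒜 where
  Adj x y := x ≠ y ∧ (x : A) * (y : A) ≠ 0
  symm := by
    constructor
    rintro x y ⟨hxy, hm⟩
    exact ⟨hxy.symm, by rwa [mul_comm]⟩
  loopless := by constructor; rintro x ⟨h, -⟩; exact h rfl

/-- Multiplication of the Jordan algebra of Clifford type `J(V,B) = F·e ⊕ V`. -/
def cliffMul {V : Type*} [AddCommGroup V] [Module F V]
    (B : V →ₗ[F] V →ₗ[F] F) (x y : F × V) : F × V :=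
  (x.1 * y.1 + B x.2 y.2, x.1 • y.2 + y.1 • x.2)

end Prelim

/-- An isomorphism of `A` with a Jordan algebra of Clifford type `J(V,B)`. -/
structure CliffordTypeIso (F : Type u) (A : Type v) [Field F]
    [NonUnitalNonAssocCommRing A] [Module F A] [SMulCommClass F A A]
    [IsScalarTower F A A] where
  V : Type v
  [instAdd : AddCommGroup V]
  [instMod : Module F V]
  B : V →ₗ[F] V →ₗ[F] F
  symm : ∀ v w : V, B v w = B w v
  iso : A ≃ₗ[F] F × V
  mul_compat : ∀ x y : A, iso (x * y) = cliffMul F B (iso x) (iso y)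
set_option linter.unusedSectionVars false

section Work

variable {F : Type u} {A : Type v} [Field F] [NonUnitalNonAssocCommRing A]
  [Module F A] [SMulCommClass F A A] [IsScalarTower F A A]

lemma mem_eigSp {a x : A} {l : F} : x ∈ eigSp F a l ↔ a * x = l • x := Iff.rfl

/-- components of a zero sum vanish -/
lemma comps_zero {η : F} (hη0 : η ≠ 0) (hη1 : η ≠ 1) {a : A} (ha : IsAxis F η a)
    {c : F} {x0 xe : A} (h0 : x0 ∈ eigSp F a (0:F)) (he : xe ∈ eigSp F a η)
    (h : c • a + x0 + xe = 0) : c = 0 ∧ x0 = 0 ∧ xe = 0 := by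
  have h0' : a * x0 = 0 := by rw [mem_eigSp] at h0; simpa using h0
  have he' : a * xe = η • xe := he
  have e1 : c • a + η • xe = 0 := by
    have := congrArg (a * ·) h
    simpa [mul_add, mul_smul_comm, ha.idem, h0', he'] using this
  have e2 : c • a + (η * η) • xe = 0 := by
    have := congrArg (a * ·) e1
    simpa [mul_add, mul_smul_comm, ha.idem, he', smul_smul] using this
  have exe : (η - η * η) • xe = 0 := by
    rw [sub_smul]
    linear_combination (norm := module) e1 - e2
  have hxe : xe = 0 := by
    rcases smul_eq_zero.mp exe with h | h
    · exfalso
      have : η * (1 - η) = 0 := by ring_nf; linear_combination h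
      rcases mul_eq_zero.mp this with h' | h'
      · exact hη0 h'
      · exact hη1 (sub_eq_zero.mp h').symm
    · exact h
  have hca : c • a = 0 := by
    have := e1
    rw [hxe, smul_zero, add_zero] at this
    exact this
  have hc : c = 0 := by
    rcases smul_eq_zero.mp hca with h | h
    · exact h
    · exact absurd h ha.ne_zero
  refine ⟨hc, ?_, hxe⟩
  have := h
  rw [hca, hxe, zero_add, add_zero] at this
  exact this

lemma exists_decomp {η : F} {a : A} (ha : IsAxis F η a) (x : A) :
    ∃ (c : F) (x0 xe : A), x0 ∈ eigSp F a (0:F) ∧ xe ∈ eigSp F a η ∧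
      x = c • a + x0 + xe := by
  have hx : x ∈ eigSp F a 1 ⊔ eigSp F a 0 ⊔ eigSp F a η := by
    rw [ha.decomp]; trivial
  rcases Submodule.mem_sup.mp hx with ⟨y, hy, xe, he, rfl⟩
  rcases Submodule.mem_sup.mp hy with ⟨x1, h1, x0, h0, rfl⟩
  rw [ha.prim, Submodule.mem_span_singleton] at h1
  obtain ⟨c, rfl⟩ := h1
  exact ⟨c, x0, xe, h0, he, rfl⟩

end Work

set_option linter.unusedSectionVars false

section Work2

variable {F : Type u} {A : Type v} [Field F] [NonUnitalNonAssocCommRing A]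
  [Module F A] [SMulCommClass F A A] [IsScalarTower F A A]

lemma idem_pair_indep {a b : A} (ha0 : a ≠ 0) (hb0 : b ≠ 0)
    (haa : a * a = a) (hbb : b * b = b) (hab : a ≠ b) (s t : F)
    (h : s • a + t • b = 0) : s = 0 ∧ t = 0 := by
  by_cases ht : t = 0
  · subst ht
    have h' : s = 0 ∨ a = 0 := by simpa using h
    rcases h' with h' | h'
    exacts [⟨h', rfl⟩, absurd h' ha0]
  · exfalso
    have htb : t • b = (-s) • a := by
      linear_combination (norm := module) h
    have hbca : b = (t⁻¹ * -s) • a := by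
      rw [mul_smul, ← htb, inv_smul_smul₀ ht]
    set c := t⁻¹ * -s with hc
    have hbsq : (c * c) • a = c • a := by
      calc (c * c) • a = (c • a) * (c • a) := by
            rw [smul_mul_assoc, mul_smul_comm, haa, smul_smul]
        _ = b * b := by rw [← hbca]
        _ = b := hbb
        _ = c • a := hbca
    have hcc : c * c - c = 0 := by
      have : (c * c - c) • a = 0 := by
        rw [sub_smul, hbsq, sub_self]
      rcases smul_eq_zero.mp this with h' | h'
      · exact h'
      · exact absurd h' ha0
    have : c * (c - 1) = 0 := by ring_nf; linear_combination hcc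
    rcases mul_eq_zero.mp this with h' | h'
    · exact hb0 (by rw [hbca, h', zero_smul])
    · have : c = 1 := by linear_combination h'
      exact hab (show a = b by rw [hbca, this, one_smul])

/-- One-sided analysis of `a*b = α•a + β•b`. -/
lemma key_analysis {η : F} (hη0 : η ≠ 0) (hη1 : η ≠ 1) {a b : A}
    (ha : IsAxis F η a) (hb : IsAxis F η b)
    (hind : ∀ s t : F, s • a + t • b = 0 → s = 0 ∧ t = 0)
    {α β : F} (h : a * b = α • a + β • b) :
    a * b = 0 ∨ (β = η ∧ 2 * (α * η) = 1 - η) := by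
  obtain ⟨φ, b0, be, h0, he, hbd⟩ := exists_decomp ha b
  have h0' : a * b0 = 0 := by
    have : a * b0 = (0:F) • b0 := h0
    simpa using this
  have he' : a * be = η • be := he
  have hab1 : a * b = φ • a + η • be := by
    rw [hbd, mul_add, mul_add, mul_smul_comm, ha.idem, h0', he', add_zero]
  have heq : (φ - (α + β * φ)) • a + (-β) • b0 + (η - β) • be = 0 := by
    have e : φ • a + η • be = α • a + β • (φ • a + b0 + be) := by
      rw [← hab1, ← hbd, h]
    linear_combination (norm := module) e
  obtain ⟨c1, c2, c3⟩ := comps_zero hη0 hη1 ha (Submodule.smul_mem _ _ h0)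
    (Submodule.smul_mem _ _ he) heq
  by_cases hbe : be = 0
  · -- b = φ•a + b0,  a*b = φ•a
    have hab2 : a * b = φ • a := by rw [hab1, hbe, smul_zero, add_zero]
    have hb0a : b0 * a = 0 := by rw [mul_comm]; exact h0'
    have hbb2 : b * b = (φ * φ) • a + b0 * b0 := by
      rw [hbd, hbe, add_zero]
      simp only [mul_add, add_mul, smul_mul_assoc, mul_smul_comm, smul_smul,
        ha.idem, h0', hb0a, smul_zero, add_zero, zero_add]
    have e : (φ * φ) • a + b0 * b0 = φ • a + b0 := by
      rw [← hbb2, hb.idem]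
      conv_lhs => rw [hbd, hbe, add_zero]
    have heq2 : (φ * φ - φ) • a + (b0 * b0 - b0) + (0:A) = 0 := by
      linear_combination (norm := module) e
    obtain ⟨d1, _, _⟩ := comps_zero hη0 hη1 ha
      (Submodule.sub_mem _ (ha.f00 b0 h0 b0 h0) h0) (Submodule.zero_mem _) heq2
    have : φ * (φ - 1) = 0 := by ring_nf; linear_combination d1
    rcases mul_eq_zero.mp this with hφ | hφ
    · left; rw [hab2, hφ, zero_smul]
    · exfalso
      have hφ1 : φ = 1 := by linear_combination hφ
      have haE : a ∈ eigSp F b 1 := by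
        show b * a = (1:F) • a
        rw [mul_comm, hab2, hφ1]
      rw [hb.prim, Submodule.mem_span_singleton] at haE
      obtain ⟨d, hd⟩ := haE
      have := (hind 1 (-d) (by rw [one_smul, neg_smul, ← hd, add_neg_cancel])).1
      exact one_ne_zero this
  · -- be ≠ 0 : β = η, b0 = 0
    have hβ : β = η := by
      rcases smul_eq_zero.mp c3 with h' | h'
      · linear_combination -h'
      · exact absurd h' hbe
    have hb00 : b0 = 0 := by
      rcases smul_eq_zero.mp c2 with h' | h'
      · exact absurd (neg_eq_zero.mp h') (hβ ▸ hη0)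
      · exact h'
    obtain ⟨y, hy1, z0, hz0, hsq⟩ := Submodule.mem_sup.mp (ha.fee be he be he)
    rw [ha.prim, Submodule.mem_span_singleton] at hy1
    obtain ⟨γ, rfl⟩ := hy1
    have hbea : be * a = η • be := by rw [mul_comm]; exact he'
    have expand : b * b = (φ * φ) • a + (φ • (η • be) + φ • (η • be)) + (γ • a + z0) := by
      rw [hbd, hb00, add_zero]
      simp only [mul_add, add_mul, smul_mul_assoc, mul_smul_comm, smul_smul,
        ha.idem, he', hbea]
      rw [← hsq]
      module
    have e : (φ * φ) • a + (φ • (η • be) + φ • (η • be)) + (γ • a + z0) = φ • a + be := by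
      rw [← expand, hb.idem]
      conv_lhs => rw [hbd, hb00, add_zero]
    have heq2 : (φ * φ + γ - φ) • a + z0 + (φ * η + φ * η - 1) • be = 0 := by
      linear_combination (norm := module) e
    obtain ⟨_, _, cc3⟩ := comps_zero hη0 hη1 ha hz0 (Submodule.smul_mem _ _ he) heq2
    have h2 : φ * η + φ * η - 1 = 0 := by
      rcases smul_eq_zero.mp cc3 with h' | h'
      · exact h'
      · exact absurd h' hbe
    refine Or.inr ⟨hβ, ?_⟩
    rw [hβ] at c1
    linear_combination (-(2*η)) * c1 + (1 - η) * h2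

lemma adjoin_eq_span {a b : A} {α β : F} (haa : a * a = a) (hbb : b * b = b)
    (h : a * b = α • a + β • b) :
    (NonUnitalAlgebra.adjoin F ({a, b} : Set A)).toSubmodule
      = Submodule.span F ({a, b} : Set A) := by
  have hA : a ∈ Submodule.span F ({a, b} : Set A) := Submodule.subset_span (by simp)
  have hB : b ∈ Submodule.span F ({a, b} : Set A) := Submodule.subset_span (by simp)
  have hAB : a * b ∈ Submodule.span F ({a, b} : Set A) := by
    rw [h]; exact Submodule.add_mem _ (Submodule.smul_mem _ _ hA) (Submodule.smul_mem _ _ hB)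
  have hmul : ∀ x y : A, x ∈ Submodule.span F ({a, b} : Set A) →
      y ∈ Submodule.span F ({a, b} : Set A) →
      x * y ∈ Submodule.span F ({a, b} : Set A) := by
    intro x y hx hy
    obtain ⟨s, t, hx'⟩ := Submodule.mem_span_pair.mp hx
    obtain ⟨u, v, hy'⟩ := Submodule.mem_span_pair.mp hy
    have expand : x * y = (s*u) • (a*a) + (s*v) • (a*b) + (t*u) • (b*a) + (t*v) • (b*b) := by
      rw [← hx', ← hy']
      rw [mul_add, add_mul, add_mul, smul_mul_assoc, smul_mul_assoc, smul_mul_assoc,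
        smul_mul_assoc, mul_smul_comm, mul_smul_comm, mul_smul_comm, mul_smul_comm,
        smul_smul, smul_smul, smul_smul, smul_smul]
      abel
    rw [expand, haa, hbb, mul_comm b a]
    exact Submodule.add_mem _ (Submodule.add_mem _ (Submodule.add_mem _
      (Submodule.smul_mem _ _ hA) (Submodule.smul_mem _ _ hAB))
      (Submodule.smul_mem _ _ hAB)) (Submodule.smul_mem _ _ hB)
  apply le_antisymm
  · intro x hx
    have hle : NonUnitalAlgebra.adjoin F ({a, b} : Set A) ≤
        (Submodule.span F ({a, b} : Set A)).toNonUnitalSubalgebra hmul :=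
      NonUnitalAlgebra.adjoin_le (fun z hz => Submodule.subset_span hz)
    exact hle hx
  · rw [Submodule.span_le]
    exact fun z hz => NonUnitalAlgebra.subset_adjoin (R := F) hz

lemma finrank_span_pair_eq_two {a b : A}
    (hind : ∀ s t : F, s • a + t • b = 0 → s = 0 ∧ t = 0) :
    Module.finrank F (Submodule.span F ({a, b} : Set A)) = 2 := by
  have hli : LinearIndependent F ![a, b] := LinearIndependent.pair_iff.mpr hind
  have hr : Set.range ![a, b] = ({a, b} : Set A) := by
    ext x
    simp [Fin.exists_fin_two, or_comm]
  have := finrank_span_eq_card hli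
  rw [hr] at this
  simpa using this

end Work2

/-- For distinct `η`-axes `a, b` in a primitive axial algebra of
Jordan type `η`, the subalgebra `N_{a,b}` generated by `a` and `b` is
2-dimensional iff (1) `ab = 0`, or (2) `η = −1` and `ab = −a − b`, or
(3) `η = 1/2` and `ab = (1/2)a + (1/2)b`; moreover in cases (2) and (3)
`N_{a,b}` has no identity element. -/

theorem two_dimensional_two_generated_subalgebras
    {F : Type u} {A : Type v} [Field F] [NonUnitalNonAssocCommRing A]
    [Module F A] [SMulCommClass F A A] [IsScalarTower F A A]
    (hchar : (2 : F) ≠ 0) (η : F) (hη0 : η ≠ 0) (hη1 : η ≠ 1)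
    (𝒜 : Set A) (h𝒜 : ∀ a ∈ 𝒜, IsAxis F η a)
    (hgen : NonUnitalAlgebra.adjoin F 𝒜 = ⊤)
    (a b : A) (ha : IsAxis F η a) (hb : IsAxis F η b) (hab : a ≠ b) :
    (Module.finrank F ↥((NonUnitalAlgebra.adjoin F ({a, b} : Set A)).toSubmodule) = 2 ↔
      (a * b = 0 ∨
       (η = -1 ∧ a * b = -a - b) ∨
       (η = 1 / 2 ∧ a * b = (1 / 2 : F) • a + (1 / 2 : F) • b))) ∧
    (((η = -1 ∧ a * b = -a - b) ∨
      (η = 1 / 2 ∧ a * b = (1 / 2 : F) • a + (1 / 2 : F) • b)) →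
      ¬ ∃ e : A, IsIdentOf F (NonUnitalAlgebra.adjoin F ({a, b} : Set A)) e) := by

  have hind : ∀ s t : F, s • a + t • b = 0 → s = 0 ∧ t = 0 :=
    idem_pair_indep ha.ne_zero hb.ne_zero ha.idem hb.idem hab
  have hindba : ∀ s t : F, s • b + t • a = 0 → s = 0 ∧ t = 0 := by
    intro s t h'
    have := hind t s (by rwa [add_comm] at h')
    exact ⟨this.2, this.1⟩
  have hspanfin : Module.finrank F (Submodule.span F ({a, b} : Set A)) = 2 :=
    finrank_span_pair_eq_two hind
  have haN : a ∈ NonUnitalAlgebra.adjoin F ({a, b} : Set A) :=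
    NonUnitalAlgebra.subset_adjoin (R := F) (by simp)
  have hbN : b ∈ NonUnitalAlgebra.adjoin F ({a, b} : Set A) :=
    NonUnitalAlgebra.subset_adjoin (R := F) (by simp)
  have half_ne : (1/2 : F) ≠ 0 := by
    rw [div_ne_zero_iff]; exact ⟨one_ne_zero, hchar⟩
  refine ⟨⟨fun hfin => ?_, ?_⟩, ?_⟩
  · -- forward direction
    have hle : Submodule.span F ({a, b} : Set A) ≤
        (NonUnitalAlgebra.adjoin F ({a, b} : Set A)).toSubmodule := by
      rw [Submodule.span_le]
      exact fun z hz => NonUnitalAlgebra.subset_adjoin (R := F) hz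
    have : FiniteDimensional F
        ((NonUnitalAlgebra.adjoin F ({a, b} : Set A)).toSubmodule) :=
      FiniteDimensional.of_finrank_pos (by rw [hfin]; norm_num)
    have heqS : Submodule.span F ({a, b} : Set A) =
        (NonUnitalAlgebra.adjoin F ({a, b} : Set A)).toSubmodule :=
      Submodule.eq_of_le_of_finrank_le hle (by rw [hfin, hspanfin])
    have habS : a * b ∈ Submodule.span F ({a, b} : Set A) := by
      rw [heqS, NonUnitalSubalgebra.mem_toSubmodule]
      exact mul_mem haN hbN
    obtain ⟨α, β, hαβ⟩ := Submodule.mem_span_pair.mp habS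
    rcases key_analysis hη0 hη1 ha hb hind hαβ.symm with h0 | ⟨hβ, hα2⟩
    · exact Or.inl h0
    · have hba : b * a = β • b + α • a := by rw [mul_comm, ← hαβ, add_comm]
      rcases key_analysis hη0 hη1 hb ha hindba hba with h0 | ⟨hα, hβ2⟩
      · exact Or.inl (by rwa [mul_comm] at h0)
      · have hfac : (η + 1) * (2 * η - 1) = 0 := by
          rw [hα] at hα2
          linear_combination hα2
        rcases mul_eq_zero.mp hfac with hcase | hcase
        · have hηm1 : η = -1 := by linear_combination hcase
          refine Or.inr (Or.inl ⟨hηm1, ?_⟩)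
          rw [← hαβ, hα, hβ, hηm1]
          module
        · have hη12 : η = 1/2 := by
            field_simp
            linear_combination hcase
          exact Or.inr (Or.inr ⟨hη12, by rw [← hαβ, hα, hβ, hη12]⟩)
  · -- reverse direction
    rintro (h0 | ⟨hη, hP⟩ | ⟨hη, hP⟩)
    · have h' : a * b = (0:F) • a + (0:F) • b := by rw [h0]; module
      rw [adjoin_eq_span ha.idem hb.idem h']
      exact hspanfin
    · have h' : a * b = (-1:F) • a + (-1:F) • b := by rw [hP]; module
      rw [adjoin_eq_span ha.idem hb.idem h']
      exact hspanfin
    · rw [adjoin_eq_span ha.idem hb.idem hP]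
      exact hspanfin
  · -- no identity element in cases (2) and (3)
    rintro (⟨hη, hP⟩ | ⟨hη, hP⟩) ⟨e, heN, hid⟩
    · have h' : a * b = (-1:F) • a + (-1:F) • b := by rw [hP]; module
      have hsp := adjoin_eq_span (F := F) ha.idem hb.idem h'
      have heS : e ∈ Submodule.span F ({a, b} : Set A) := by
        rw [← hsp]; exact heN
      obtain ⟨s, t, hes⟩ := Submodule.mem_span_pair.mp heS
      have hea : e * a = a := hid a haN
      have heb : e * b = b := hid b hbN
      have expand : e * a = s • a + t • (a * b) := by
        rw [← hes, add_mul, smul_mul_assoc, smul_mul_assoc, ha.idem, mul_comm b a]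
      rw [hP] at expand
      have hz : (s - t - 1) • a + (-t) • b = 0 := by
        have e1 : s • a + t • (-a - b) = a := by rw [← expand, hea]
        linear_combination (norm := module) e1
      obtain ⟨h1, h2⟩ := hind _ _ hz
      have ht : t = 0 := by linear_combination -h2
      have hs : s = 1 := by linear_combination h1 + ht
      have hea' : e = a := by rw [← hes, hs, ht, one_smul, zero_smul, add_zero]
      have habb : a * b = b := by rw [← hea', heb]
      rw [hP] at habb
      have hz2 : (1:F) • a + (2:F) • b = 0 := by
        linear_combination (norm := module) -habb
      exact one_ne_zero ((hind _ _ hz2).1)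
    · have hsp := adjoin_eq_span (F := F) ha.idem hb.idem hP
      have heS : e ∈ Submodule.span F ({a, b} : Set A) := by
        rw [← hsp]; exact heN
      obtain ⟨s, t, hes⟩ := Submodule.mem_span_pair.mp heS
      have hea : e * a = a := hid a haN
      have heb : e * b = b := hid b hbN
      have expand : e * a = s • a + t • (a * b) := by
        rw [← hes, add_mul, smul_mul_assoc, smul_mul_assoc, ha.idem, mul_comm b a]
      rw [hP] at expand
      have hz : (s + t * (1/2) - 1) • a + (t * (1/2)) • b = 0 := by
        have e1 : s • a + t • ((1/2 : F) • a + (1/2 : F) • b) = a := by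
          rw [← expand, hea]
        linear_combination (norm := module) e1
      obtain ⟨h1, h2⟩ := hind _ _ hz
      have ht : t = 0 := by
        rcases mul_eq_zero.mp h2 with h' | h'
        · exact h'
        · exact absurd h' half_ne
      have hs : s = 1 := by rw [ht] at h1; linear_combination h1
      have hea' : e = a := by rw [← hes, hs, ht, one_smul, zero_smul, add_zero]
      have habb : a * b = b := by rw [← hea', heb]
      rw [hP] at habb
      have h21 : (2 : F) * (1/2) = 1 := by
        rw [mul_one_div]
        exact div_self hchar
      have habb2 : (2 : F) • ((1/2 : F) • a + (1/2 : F) • b) = (2 : F) • b :=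
        congrArg (fun z => (2 : F) • z) habb
      rw [smul_add, smul_smul, smul_smul, h21, one_smul, one_smul] at habb2
      have hz2 : (1 : F) • a + (-1 : F) • b = 0 := by
        linear_combination (norm := module) habb2
      exact one_ne_zero ((hind _ _ hz2).1)
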